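/- arXiv:2110.13178 — 2 statements merged into one kernel-verified Lean document; each statement's English description precedes it below -/
import Mathlib

section
/- Let A and B be complex d×d matrices with spectral radii s(A), s(B) and operator norms ‖A‖, ‖B‖. Then |s(A) − s(B)| ≤ (‖A‖ + ‖B‖)^{1 − 1/d} · ‖A − B‖^{1/d}. -/
/-- Operator (spectral / Schatten-∞) norm of a complex matrix. -/
noncomputable def opNorm {d : ℕ} (A : Matrix (Fin d) (Fin d) ℂ) : ℝ :=
  ‖Matrix.toEuclideanCLM (𝕜 := ℂ) A‖

/-- Spectral radius of a complex matrix. -/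
noncomputable def specRad {d : ℕ} (A : Matrix (Fin d) (Fin d) ℂ) : ℝ :=
  (spectralRadius ℂ A).toReal

set_option synthInstance.maxHeartbeats 1000000
set_option maxHeartbeats 1000000

open Matrix

section base

lemma eval_charpoly' {d : ℕ} (M : Matrix (Fin d) (Fin d) ℂ) (μ : ℂ) :
    (M.charpoly).eval μ = (μ • (1 : Matrix (Fin d) (Fin d) ℂ) - M).det := by
  rw [Matrix.charpoly, ← Polynomial.coe_evalRingHom, RingHom.map_det]
  congr 1
  ext i j
  by_cases h : i = j <;>
    simp [h, Matrix.charmatrix_apply, Matrix.one_apply, Matrix.diagonal_apply]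

lemma det_eq_zero_of_mem_spectrum {d : ℕ} {M : Matrix (Fin d) (Fin d) ℂ} {μ : ℂ}
    (h : μ ∈ spectrum ℂ M) :
    (μ • (1 : Matrix (Fin d) (Fin d) ℂ) - M).det = 0 := by
  rw [spectrum.mem_iff] at h
  by_contra hdet
  rw [Algebra.algebraMap_eq_smul_one] at h
  exact h ((Matrix.isUnit_iff_isUnit_det _).2 (isUnit_iff_ne_zero.2 hdet))

lemma mem_spectrum_of_det_eq_zero {d : ℕ} {M : Matrix (Fin d) (Fin d) ℂ} {μ : ℂ}
    (h : (μ • (1 : Matrix (Fin d) (Fin d) ℂ) - M).det = 0) :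
    μ ∈ spectrum ℂ M := by
  rw [spectrum.mem_iff, Algebra.algebraMap_eq_smul_one]
  intro hu
  rw [Matrix.isUnit_iff_isUnit_det, isUnit_iff_ne_zero] at hu
  exact hu h

lemma nontrivial_euc {d : ℕ} (hd : 0 < d) : Nontrivial (EuclideanSpace ℂ (Fin d)) := by
  refine ⟨0, EuclideanSpace.single ⟨0, hd⟩ 1, fun h => ?_⟩
  have := congrArg (fun v : EuclideanSpace ℂ (Fin d) => v ⟨0, hd⟩) h
  simp [EuclideanSpace.single_apply] at this

lemma spectrum_eq_CLM {d : ℕ} (M : Matrix (Fin d) (Fin d) ℂ) :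
    spectrum ℂ ((Matrix.toEuclideanCLM (𝕜 := ℂ) M)) = spectrum ℂ M :=
  AlgEquiv.spectrum_eq (Matrix.toEuclideanCLM (𝕜 := ℂ) (n := Fin d)) M

lemma norm_le_opNorm_of_mem {d : ℕ} (hd : 0 < d) {M : Matrix (Fin d) (Fin d) ℂ} {μ : ℂ}
    (h : μ ∈ spectrum ℂ M) : ‖μ‖ ≤ opNorm M := by
  haveI := nontrivial_euc hd
  rw [← spectrum_eq_CLM] at h
  exact spectrum.norm_le_norm_of_mem h

lemma specRad_spec_eq {d : ℕ} (M : Matrix (Fin d) (Fin d) ℂ) :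
    spectralRadius ℂ (Matrix.toEuclideanCLM (𝕜 := ℂ) M) = spectralRadius ℂ M := by
  unfold spectralRadius
  rw [spectrum_eq_CLM]

lemma specRad_exists {d : ℕ} (hd : 0 < d) (M : Matrix (Fin d) (Fin d) ℂ) :
    ∃ μ ∈ spectrum ℂ M, ‖μ‖ = specRad M := by
  haveI := nontrivial_euc hd
  obtain ⟨z, hz, hz2⟩ := spectrum.exists_nnnorm_eq_spectralRadius
    (a := Matrix.toEuclideanCLM (𝕜 := ℂ) M)
  rw [spectrum_eq_CLM] at hz
  refine ⟨z, hz, ?_⟩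
  rw [specRad, ← specRad_spec_eq M, ← hz2, ENNReal.coe_toReal, coe_nnnorm]

lemma norm_le_specRad_of_mem {d : ℕ} (hd : 0 < d) {M : Matrix (Fin d) (Fin d) ℂ} {μ : ℂ}
    (h : μ ∈ spectrum ℂ M) : ‖μ‖ ≤ specRad M := by
  haveI := nontrivial_euc hd
  have h1 : (‖μ‖₊ : ENNReal) ≤ spectralRadius ℂ M := le_iSup₂ (α := ENNReal) _ h
  have h2 : spectralRadius ℂ M ≤ (‖Matrix.toEuclideanCLM (𝕜 := ℂ) M‖₊ : ENNReal) := by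
    rw [← specRad_spec_eq M]
    exact spectrum.spectralRadius_le_nnnorm _
  rw [specRad]
  calc ‖μ‖ = ((‖μ‖₊ : ENNReal)).toReal := by simp
  _ ≤ _ := ENNReal.toReal_mono (ne_top_of_le_ne_top (by simp) h2) h1

lemma specRad_nonneg {d : ℕ} (M : Matrix (Fin d) (Fin d) ℂ) : 0 ≤ specRad M :=
  ENNReal.toReal_nonneg

end base

lemma clm_eigen {d : ℕ} {N : Matrix (Fin d) (Fin d) ℂ} (hN : N.IsHermitian) (i : Fin d) :
    Matrix.toEuclideanCLM (𝕜 := ℂ) N (hN.eigenvectorBasis i)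
      = (hN.eigenvalues i : ℂ) • (hN.eigenvectorBasis i) := by
  apply (WithLp.equiv 2 _).injective
  change WithLp.ofLp (Matrix.toEuclideanCLM (𝕜 := ℂ) N (hN.eigenvectorBasis i))
    = WithLp.ofLp ((hN.eigenvalues i : ℂ) • hN.eigenvectorBasis i)
  rw [Matrix.ofLp_toEuclideanCLM]
  rw [hN.mulVec_eigenvectorBasis i]
  ext j
  simp only [Pi.smul_apply, WithLp.ofLp_smul, Pi.smul_apply, smul_eq_mul,
    Complex.real_smul]

-- eigenvalue bounded by opNorm squared
lemma eig_le {d : ℕ} (M : Matrix (Fin d) (Fin d) ℂ)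
    (hN : (Mᴴ * M).IsHermitian) (i : Fin d) :
    hN.eigenvalues i ≤ opNorm M ^ 2 := by
  set T := Matrix.toEuclideanCLM (𝕜 := ℂ) M with hT
  set S := Matrix.toEuclideanCLM (𝕜 := ℂ) Mᴴ with hS
  have h1 : Matrix.toEuclideanCLM (𝕜 := ℂ) (Mᴴ * M) = S * T := _root_.map_mul _ _ _
  have hSnorm : ‖S‖ = ‖T‖ := by
    have h2 : S = ContinuousLinearMap.adjoint T := by
      rw [← ContinuousLinearMap.star_eq_adjoint, hS, hT, ← Matrix.star_eq_conjTranspose,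
        map_star]
    rw [h2]
    exact LinearIsometryEquiv.norm_map ContinuousLinearMap.adjoint T
  have h2 := clm_eigen hN i
  have hb : ‖(hN.eigenvectorBasis i : EuclideanSpace ℂ (Fin d))‖ = 1 :=
    hN.eigenvectorBasis.orthonormal.1 i
  have h3 : ‖Matrix.toEuclideanCLM (𝕜 := ℂ) (Mᴴ * M) (hN.eigenvectorBasis i)‖
      = |hN.eigenvalues i| := by
    rw [h2, norm_smul, hb, mul_one]
    simp
  have h4 : ‖Matrix.toEuclideanCLM (𝕜 := ℂ) (Mᴴ * M) (hN.eigenvectorBasis i)‖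
      ≤ ‖T‖ ^ 2 := by
    rw [h1]
    have h5 : (S * T) (hN.eigenvectorBasis i) = S (T (hN.eigenvectorBasis i)) := rfl
    rw [h5]
    calc ‖S (T (hN.eigenvectorBasis i))‖ ≤ ‖S‖ * ‖T (hN.eigenvectorBasis i)‖ :=
          S.le_opNorm _
    _ ≤ ‖S‖ * (‖T‖ * ‖(hN.eigenvectorBasis i : EuclideanSpace ℂ (Fin d))‖) :=
          mul_le_mul_of_nonneg_left (T.le_opNorm _) (norm_nonneg S)
    _ = ‖T‖ ^ 2 := by rw [hSnorm, hb, mul_one, sq]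
  calc hN.eigenvalues i ≤ |hN.eigenvalues i| := le_abs_self _
  _ ≤ ‖T‖ ^ 2 := h3 ▸ h4
  _ = opNorm M ^ 2 := rfl

-- Rayleigh: exists eigenvalue below ‖T x‖²
lemma exists_eig_le {d : ℕ} (hd : 0 < d) (M : Matrix (Fin d) (Fin d) ℂ)
    (hN : (Mᴴ * M).IsHermitian) (x : EuclideanSpace ℂ (Fin d)) (hx : ‖x‖ = 1) :
    ∃ i, hN.eigenvalues i ≤ ‖Matrix.toEuclideanCLM (𝕜 := ℂ) M x‖ ^ 2 := by
  classical
  set T := Matrix.toEuclideanCLM (𝕜 := ℂ) M with hT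
  set b := hN.eigenvectorBasis with hb
  set c : EuclideanSpace ℂ (Fin d) := b.repr x with hc
  set e := hN.eigenvalues with he
  have hsum : ∑ i, ‖c i‖ ^ 2 = 1 := by
    have h1 : ‖c‖ = 1 := by rw [hc, b.repr.norm_map, hx]
    have := EuclideanSpace.norm_eq c
    rw [h1] at this
    have h2 : ∑ i, ‖c i‖ ^ 2 = 1 ^ 2 := by
      rw [← Real.sq_sqrt (show (0:ℝ) ≤ ∑ i, ‖c i‖ ^ 2 by positivity), ← this]
    simpa using h2
  -- T' x in coordinates
  have hT'x : Matrix.toEuclideanCLM (𝕜 := ℂ) (Mᴴ * M) x = ∑ i, ((e i : ℂ) * c i) • b i := by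
    conv_lhs => rw [← b.sum_repr x]
    rw [map_sum]
    congr 1
    ext i
    rw [_root_.map_smul, clm_eigen hN i, smul_smul, mul_comm]
  have hinner : (inner ℂ x (Matrix.toEuclideanCLM (𝕜 := ℂ) (Mᴴ * M) x) : ℂ)
      = ∑ i, (e i : ℂ) * (‖c i‖ : ℂ) ^ 2 := by
    rw [hT'x, inner_sum]
    congr 1
    ext i
    rw [inner_smul_right]
    have h5 : (inner ℂ x (b i) : ℂ) = (starRingEnd ℂ) (c i) := by
      rw [← inner_conj_symm, ← b.repr_apply_apply]
    rw [h5]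
    have h6 : c i * (starRingEnd ℂ) (c i) = (‖c i‖ : ℂ) ^ 2 := by
      rw [Complex.mul_conj]
      norm_cast
      rw [Complex.normSq_eq_norm_sq]
      push_cast
      ring
    rw [mul_assoc, h6]
  have h1 : Matrix.toEuclideanCLM (𝕜 := ℂ) (Mᴴ * M) = Matrix.toEuclideanCLM (𝕜 := ℂ) Mᴴ * T :=
    _root_.map_mul _ _ _
  have hadj : Matrix.toEuclideanCLM (𝕜 := ℂ) Mᴴ = ContinuousLinearMap.adjoint T := by
    rw [← ContinuousLinearMap.star_eq_adjoint, hT, ← Matrix.star_eq_conjTranspose, map_star]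
  have hsq : (inner ℂ x (Matrix.toEuclideanCLM (𝕜 := ℂ) (Mᴴ * M) x) : ℂ) = (‖T x‖ : ℂ) ^ 2 := by
    have h7 : Matrix.toEuclideanCLM (𝕜 := ℂ) (Mᴴ * M) x
        = ContinuousLinearMap.adjoint T (T x) := by rw [h1, hadj]; rfl
    rw [h7, ContinuousLinearMap.adjoint_inner_right, inner_self_eq_norm_sq_to_K]
    norm_cast
  have hreal : ∑ i, e i * ‖c i‖ ^ 2 = ‖T x‖ ^ 2 := by
    have := hinner.symm.trans hsq
    have h8 : ((∑ i, e i * ‖c i‖ ^ 2 : ℝ) : ℂ) = ((‖T x‖ ^ 2 : ℝ) : ℂ) := by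
      push_cast
      rw [← this]
    exact_mod_cast h8
  obtain ⟨i₀, -, hmin⟩ := Finset.exists_min_image Finset.univ e ⟨⟨0, hd⟩, Finset.mem_univ _⟩
  refine ⟨i₀, ?_⟩
  calc e i₀ = e i₀ * ∑ i, ‖c i‖ ^ 2 := by rw [hsum, mul_one]
  _ = ∑ i, e i₀ * ‖c i‖ ^ 2 := by rw [Finset.mul_sum]
  _ ≤ ∑ i, e i * ‖c i‖ ^ 2 := Finset.sum_le_sum fun i _ =>
        mul_le_mul_of_nonneg_right (hmin i (Finset.mem_univ i)) (by positivity)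
  _ = ‖T x‖ ^ 2 := hreal

-- Key determinant bound
lemma key_det {d : ℕ} (hd : 0 < d) (M : Matrix (Fin d) (Fin d) ℂ)
    (x : EuclideanSpace ℂ (Fin d)) (hx : ‖x‖ = 1) :
    ‖M.det‖ ≤ ‖Matrix.toEuclideanCLM (𝕜 := ℂ) M x‖ * opNorm M ^ (d - 1) := by
  classical
  have hN : (Mᴴ * M).IsHermitian := Matrix.isHermitian_conjTranspose_mul_self M
  set e := hN.eigenvalues with he
  have hnn : ∀ i, 0 ≤ e i := fun i => Matrix.eigenvalues_conjTranspose_mul_self_nonneg M i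
  set T := Matrix.toEuclideanCLM (𝕜 := ℂ) M with hT
  have hop : 0 ≤ opNorm M := norm_nonneg _
  have hTx : 0 ≤ ‖T x‖ := norm_nonneg _
  -- |det M|² = ∏ e i
  have hdet : ‖M.det‖ ^ 2 = ∏ i, e i := by
    have h1 : (Mᴴ * M).det = ∏ i, (e i : ℂ) := hN.det_eq_prod_eigenvalues
    have h2 : (Mᴴ * M).det = ((‖M.det‖ : ℂ)) ^ 2 := by
      rw [Matrix.det_mul, Matrix.det_conjTranspose]
      have : (star M.det) * M.det = ((‖M.det‖ : ℂ)) ^ 2 := by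
        rw [Complex.star_def, mul_comm, Complex.mul_conj]
        rw [Complex.normSq_eq_norm_sq]
        push_cast
        ring
      exact this
    have h3 : ((‖M.det‖ ^ 2 : ℝ) : ℂ) = ((∏ i, e i : ℝ) : ℂ) := by
      push_cast
      rw [← h1, ← h2]
    exact_mod_cast h3
  obtain ⟨i₀, hi₀⟩ := exists_eig_le hd M hN x hx
  have hprod : ∏ i, e i ≤ ‖T x‖ ^ 2 * (opNorm M ^ 2) ^ (d - 1) := by
    rw [← Finset.mul_prod_erase Finset.univ e (Finset.mem_univ i₀)]
    have hcard : (Finset.univ.erase i₀).card = d - 1 := by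
      rw [Finset.card_erase_of_mem (Finset.mem_univ i₀), Finset.card_univ, Fintype.card_fin]
    have hrest : ∏ i ∈ Finset.univ.erase i₀, e i ≤ (opNorm M ^ 2) ^ (d - 1) := by
      rw [← hcard, ← Finset.prod_const]
      exact Finset.prod_le_prod (fun i _ => hnn i) (fun i _ => eig_le M hN i)
    exact mul_le_mul hi₀ hrest (Finset.prod_nonneg fun i _ => hnn i) (by positivity)
  have hfin : ‖M.det‖ ^ 2 ≤ (‖T x‖ * opNorm M ^ (d - 1)) ^ 2 := by
    rw [hdet, mul_pow, ← pow_mul, mul_comm (d-1) 2, pow_mul]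
    exact hprod
  exact (pow_le_pow_iff_left₀ (norm_nonneg _) (by positivity) two_ne_zero).mp hfin

-- Elsner one-sided bound
lemma one_sided {d : ℕ} (hd : 0 < d) (A B : Matrix (Fin d) (Fin d) ℂ)
    (key_det : ∀ (M : Matrix (Fin d) (Fin d) ℂ) (x : EuclideanSpace ℂ (Fin d)), ‖x‖ = 1 →
      ‖M.det‖ ≤ ‖Matrix.toEuclideanCLM (𝕜 := ℂ) M x‖ * opNorm M ^ (d - 1)) :
    specRad A - specRad B ≤
      (opNorm A + opNorm B) ^ ((1 : ℝ) - 1 / d) * opNorm (A - B) ^ ((1 : ℝ) / d) := by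
  have hople : (0:ℝ) ≤ opNorm A + opNorm B := by
    have : (0:ℝ) ≤ opNorm A := norm_nonneg _
    have : (0:ℝ) ≤ opNorm B := norm_nonneg _
    unfold opNorm at *; linarith
  have hABn : (0:ℝ) ≤ opNorm (A - B) := norm_nonneg _
  have hRHS : 0 ≤ (opNorm A + opNorm B) ^ ((1 : ℝ) - 1 / d) * opNorm (A - B) ^ ((1 : ℝ) / d) :=
    mul_nonneg (Real.rpow_nonneg hople _) (Real.rpow_nonneg hABn _)
  rcases le_or_gt (specRad A) (specRad B) with hle | hlt
  · linarith
  set t : ℝ := specRad A - specRad B with ht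
  have htpos : 0 < t := sub_pos.2 hlt
  -- eigenvalue of A achieving the spectral radius
  obtain ⟨lam, hlam, hlamnorm⟩ := specRad_exists hd A
  -- eigenvector
  obtain ⟨v, hv0, hvec⟩ := (Matrix.exists_mulVec_eq_zero_iff).2
    (det_eq_zero_of_mem_spectrum hlam)
  set w : EuclideanSpace ℂ (Fin d) := (WithLp.equiv 2 _).symm v with hw
  have hw0 : w ≠ 0 := by
    simp only [hw, ne_eq]
    intro h
    exact hv0 ((WithLp.equiv 2 _).symm.injective (by simpa using h))
  have hwn : ‖w‖ ≠ 0 := norm_ne_zero_iff.2 hw0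
  set x : EuclideanSpace ℂ (Fin d) := ((‖w‖ : ℂ))⁻¹ • w with hx
  have hxnorm : ‖x‖ = 1 := by
    rw [hx, norm_smul, norm_inv, Complex.norm_real, Real.norm_eq_abs,
      abs_of_nonneg (norm_nonneg w)]
    field_simp
  -- the eigen-equation at the CLM level
  have hTw : Matrix.toEuclideanCLM (𝕜 := ℂ)
      (lam • (1 : Matrix (Fin d) (Fin d) ℂ) - A) w = 0 := by
    apply (WithLp.equiv 2 _).injective
    change WithLp.ofLp (Matrix.toEuclideanCLM (𝕜 := ℂ) (lam • (1 : Matrix (Fin d) (Fin d) ℂ) - A) w)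
      = WithLp.ofLp (0 : EuclideanSpace ℂ (Fin d))
    rw [Matrix.ofLp_toEuclideanCLM]
    simpa [hw] using hvec
  have hTx : Matrix.toEuclideanCLM (𝕜 := ℂ)
      (lam • (1 : Matrix (Fin d) (Fin d) ℂ) - A) x = 0 := by
    rw [hx, _root_.map_smul, hTw, smul_zero]
  -- apply key determinant bound to lam • 1 - B
  have hkey := key_det (lam • (1 : Matrix (Fin d) (Fin d) ℂ) - B) x hxnorm
  -- the image of x
  have hsplit : (lam • (1 : Matrix (Fin d) (Fin d) ℂ) - B)
      = (lam • (1 : Matrix (Fin d) (Fin d) ℂ) - A) + (A - B) := (sub_add_sub_cancel _ _ _).symm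
  have himg : ‖Matrix.toEuclideanCLM (𝕜 := ℂ)
      (lam • (1 : Matrix (Fin d) (Fin d) ℂ) - B) x‖ ≤ opNorm (A - B) := by
    rw [hsplit, map_add, ContinuousLinearMap.add_apply, hTx, zero_add]
    calc ‖Matrix.toEuclideanCLM (𝕜 := ℂ) (A - B) x‖
        ≤ ‖Matrix.toEuclideanCLM (𝕜 := ℂ) (A - B)‖ * ‖x‖ :=
          (Matrix.toEuclideanCLM (𝕜 := ℂ) (A - B)).le_opNorm x
    _ = opNorm (A - B) := by rw [hxnorm, mul_one]; rfl
  -- opNorm bound on lam • 1 - B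
  have hopB : opNorm (lam • (1 : Matrix (Fin d) (Fin d) ℂ) - B) ≤ opNorm A + opNorm B := by
    have h1 : Matrix.toEuclideanCLM (𝕜 := ℂ) (lam • (1 : Matrix (Fin d) (Fin d) ℂ) - B)
        = lam • (1 : EuclideanSpace ℂ (Fin d) →L[ℂ] EuclideanSpace ℂ (Fin d))
          - Matrix.toEuclideanCLM (𝕜 := ℂ) B := by
      rw [map_sub, _root_.map_smul, _root_.map_one]
    show ‖Matrix.toEuclideanCLM (𝕜 := ℂ) (lam • (1 : Matrix (Fin d) (Fin d) ℂ) - B)‖ ≤ _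
    rw [h1]
    refine (norm_sub_le _ _).trans ?_
    have h2 : ‖lam • (1 : EuclideanSpace ℂ (Fin d) →L[ℂ] EuclideanSpace ℂ (Fin d))‖ ≤ ‖lam‖ := by
      refine (norm_smul_le lam (1 : EuclideanSpace ℂ (Fin d) →L[ℂ] EuclideanSpace ℂ (Fin d))).trans ?_
      have h2a : ‖(1 : EuclideanSpace ℂ (Fin d) →L[ℂ] EuclideanSpace ℂ (Fin d))‖ ≤ 1 :=
        ContinuousLinearMap.norm_id_le
      calc ‖lam‖ * ‖(1 : EuclideanSpace ℂ (Fin d) →L[ℂ] EuclideanSpace ℂ (Fin d))‖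
          ≤ ‖lam‖ * 1 := mul_le_mul_of_nonneg_left h2a (norm_nonneg lam)
      _ = ‖lam‖ := mul_one _
    have h3 : ‖lam‖ ≤ opNorm A := norm_le_opNorm_of_mem hd hlam
    have h4 : ‖Matrix.toEuclideanCLM (𝕜 := ℂ) B‖ = opNorm B := rfl
    linarith
  -- lower bound for the determinant
  have hdetlow : t ^ d ≤ ‖(lam • (1 : Matrix (Fin d) (Fin d) ℂ) - B).det‖ := by
    have hsplits : (B.charpoly).Splits := IsAlgClosed.splits _
    have hmonic := B.charpoly_monic
    have hcard : Multiset.card (B.charpoly).roots = d := by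
      rw [(Polynomial.splits_iff_card_roots).1 hsplits, Matrix.charpoly_natDegree_eq_dim,
        Fintype.card_fin]
    have heval : (lam • (1 : Matrix (Fin d) (Fin d) ℂ) - B).det
        = ((B.charpoly).roots.map (fun μ => lam - μ)).prod := by
      rw [← eval_charpoly']
      conv_lhs => rw [hsplits.eq_prod_roots_of_monic hmonic]
      rw [Polynomial.eval_multiset_prod, Multiset.map_map]
      congr 1
      ext μ
      simp
    -- work with nnnorm
    have hnorm : ‖(lam • (1 : Matrix (Fin d) (Fin d) ℂ) - B).det‖₊
        = (((B.charpoly).roots.map (fun μ => lam - μ)).map (fun z => ‖z‖₊)).prod := by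
      rw [heval]
      exact ((Multiset.prod_hom _ (nnnormHom (α := ℂ)).toMonoidHom)).symm
    set tN : NNReal := ⟨t, htpos.le⟩ with htN
    have hlow : ∀ z ∈ ((B.charpoly).roots.map (fun μ => lam - μ)).map (fun z => ‖z‖₊),
        tN ≤ z := by
      intro z hz
      rw [Multiset.map_map, Multiset.mem_map] at hz
      obtain ⟨μ, hμ, rfl⟩ := hz
      have hμspec : μ ∈ spectrum ℂ B := by
        apply mem_spectrum_of_det_eq_zero
        rw [← eval_charpoly']
        exact (Polynomial.mem_roots (hmonic.ne_zero)).1 hμ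
      have h5 : ‖μ‖ ≤ specRad B := norm_le_specRad_of_mem hd hμspec
      have h6 : t ≤ ‖lam - μ‖ := by
        have := norm_sub_norm_le lam μ
        rw [hlamnorm] at this
        simp only [ht]
        linarith
      rw [← NNReal.coe_le_coe]; exact h6
    have hpow : tN ^ d ≤ ((((B.charpoly).roots.map (fun μ => lam - μ)).map
        (fun z => ‖z‖₊))).prod := by
      have hcard2 : Multiset.card (((B.charpoly).roots.map (fun μ => lam - μ)).map
          (fun z => ‖z‖₊)) = d := by
        rw [Multiset.card_map, Multiset.card_map, hcard]
      conv_lhs => rw [← hcard2]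
      exact Multiset.pow_card_le_prod hlow
    rw [← hnorm] at hpow
    calc t ^ d = ((tN ^ d : NNReal) : ℝ) := by rw [NNReal.coe_pow]; rfl
    _ ≤ ((‖(lam • (1 : Matrix (Fin d) (Fin d) ℂ) - B).det‖₊ : NNReal) : ℝ) := by
        exact_mod_cast hpow
    _ = _ := rfl
  -- combine
  have hcomb : t ^ d ≤ opNorm (A - B) * (opNorm A + opNorm B) ^ (d - 1) := by
    calc t ^ d ≤ ‖(lam • (1 : Matrix (Fin d) (Fin d) ℂ) - B).det‖ := hdetlow
    _ ≤ ‖Matrix.toEuclideanCLM (𝕜 := ℂ) (lam • (1 : Matrix (Fin d) (Fin d) ℂ) - B) x‖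
          * opNorm (lam • (1 : Matrix (Fin d) (Fin d) ℂ) - B) ^ (d - 1) := hkey
    _ ≤ opNorm (A - B) * (opNorm A + opNorm B) ^ (d - 1) := by
        refine mul_le_mul himg (pow_le_pow_left₀ (norm_nonneg _) hopB _)
          (pow_nonneg (norm_nonneg _) _) hABn
  -- take d-th root
  have hd0 : (d : ℝ) ≠ 0 := Nat.cast_ne_zero.2 hd.ne'
  have hfinal : t ≤ (opNorm (A - B) * (opNorm A + opNorm B) ^ (d - 1)) ^ ((1:ℝ) / d) := by
    have h7 : t = (t ^ d) ^ ((1:ℝ) / d) := by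
      rw [← Real.rpow_natCast t d, ← Real.rpow_mul htpos.le]
      rw [mul_one_div, div_self hd0, Real.rpow_one]
    rw [h7]
    exact Real.rpow_le_rpow (pow_nonneg htpos.le d) hcomb (by positivity)
  have hsplitpow : (opNorm (A - B) * (opNorm A + opNorm B) ^ (d - 1)) ^ ((1:ℝ) / d)
      = (opNorm A + opNorm B) ^ ((1 : ℝ) - 1 / d) * opNorm (A - B) ^ ((1 : ℝ) / d) := by
    rw [Real.mul_rpow hABn (pow_nonneg hople _)]
    rw [mul_comm]
    congr 1
    rw [← Real.rpow_natCast (opNorm A + opNorm B) (d - 1), ← Real.rpow_mul hople]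
    congr 1
    have : ((d - 1 : ℕ) : ℝ) = (d : ℝ) - 1 := by
      have : 1 ≤ d := hd
      push_cast [this]
      ring
    rw [this]
    field_simp
  linarith [hsplitpow ▸ hfinal]


/-- |s(A) − s(B)| ≤ (‖A‖ + ‖B‖)^{1 − 1/d} · ‖A − B‖^{1/d}. -/
theorem spectral_radius_difference_bound {d : ℕ} (hd : 0 < d)
    (A B : Matrix (Fin d) (Fin d) ℂ) :
    |specRad A - specRad B| ≤
      (opNorm A + opNorm B) ^ ((1 : ℝ) - 1 / d) * opNorm (A - B) ^ ((1 : ℝ) / d) := by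
  have key : ∀ (M : Matrix (Fin d) (Fin d) ℂ) (x : EuclideanSpace ℂ (Fin d)), ‖x‖ = 1 →
      ‖M.det‖ ≤ ‖Matrix.toEuclideanCLM (𝕜 := ℂ) M x‖ * opNorm M ^ (d - 1) :=
    fun M x hx => key_det hd M x hx
  have h1 := one_sided hd A B key
  have h2 := one_sided hd B A key
  have hBA : opNorm (B - A) = opNorm (A - B) := by
    show ‖Matrix.toEuclideanCLM (𝕜 := ℂ) (B - A)‖ = ‖Matrix.toEuclideanCLM (𝕜 := ℂ) (A - B)‖
    rw [show B - A = -(A - B) from (neg_sub A B).symm, map_neg, norm_neg]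
  rw [hBA, add_comm (opNorm B) (opNorm A)] at h2
  rw [abs_sub_le_iff]
  exact ⟨h1, h2⟩
end

section
/- Let S ⊂ U(d) be a finite set of unitaries forming a unitary 2-design, and let Λ be a unital quantum channel on M_d(ℂ) with average fidelities F(C,Λ) = (d·F_e(C†∘Λ) + 1)/(d+1) where F_e is the entanglement fidelity. Then Λ = (1/|S|) Σ_{C∈S} (D·F(C,Λ) − D/d + 1)·ω(C), where D = d(d+1)(d²−1) and ω(C) is the channel X ↦ C X C†. (Equivalently: a unital channel is determined linearly by its average gate fidelities relative to a unitary 2-design.) -/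
open scoped Matrix Kronecker ComplexOrder

/-- Unnormalized Choi matrix of a superoperator. -/
noncomputable def choi {n : Type*} [Fintype n] [DecidableEq n]
    (Φ : Matrix n n ℂ →ₗ[ℂ] Matrix n n ℂ) : Matrix (n × n) (n × n) ℂ :=
  Matrix.of fun p q => (Φ (Matrix.single p.1 q.1 1)) p.2 q.2

/-- The swap (flip) operator on ℂ^d ⊗ ℂ^d. -/
noncomputable def swapMatrix (d : ℕ) : Matrix (Fin d × Fin d) (Fin d × Fin d) ℂ :=
  Matrix.of fun p q => if p.1 = q.2 ∧ p.2 = q.1 then 1 else 0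

/-- Entanglement fidelity F_e(C† ∘ Λ) = (1/d²) Σ_{ij} (Cᴴ Λ(E_ij) C)_{ij}. -/
noncomputable def entFid {d : ℕ}
    (Λ : Matrix (Fin d) (Fin d) ℂ →ₗ[ℂ] Matrix (Fin d) (Fin d) ℂ)
    (C : Matrix (Fin d) (Fin d) ℂ) : ℂ :=
  ((d : ℂ) ^ 2)⁻¹ *
    ∑ i : Fin d, ∑ j : Fin d, (Cᴴ * Λ (Matrix.single i j 1) * C) i j

/-- Average gate fidelity F(C,Λ) = (d·F_e(C†∘Λ) + 1)/(d + 1). -/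
noncomputable def avgFid {d : ℕ}
    (Λ : Matrix (Fin d) (Fin d) ℂ →ₗ[ℂ] Matrix (Fin d) (Fin d) ℂ)
    (C : Matrix (Fin d) (Fin d) ℂ) : ℂ :=
  ((d : ℂ) * entFid Λ C + 1) / ((d : ℂ) + 1)

section Helpers

lemma kronAdj {d : ℕ} (A B : Matrix (Fin d) (Fin d) ℂ) : (A ⊗ₖ B)ᴴ = Aᴴ ⊗ₖ Bᴴ := by
  ext ⟨i,j⟩ ⟨k,l⟩
  simp [Matrix.conjTranspose_apply, Matrix.kroneckerMap_apply, mul_comm]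

lemma mulStd {d : ℕ} (C : Matrix (Fin d) (Fin d) ℂ) (c a e b : Fin d) :
    (C * Matrix.single c a (1:ℂ) * Cᴴ) e b = C e c * star (C b a) := by
  simp [Matrix.mul_apply, Matrix.single, Matrix.conjTranspose_apply, ite_and,
    Finset.mul_sum, mul_comm]

lemma swapTraceStd {d : ℕ} (X : Matrix (Fin d) (Fin d) ℂ) (c a : Fin d) :
    (swapMatrix d * (Matrix.single c a (1:ℂ) ⊗ₖ X)).trace = X a c := by
  simp [swapMatrix, Matrix.trace, Matrix.mul_apply, Matrix.diag, Matrix.kroneckerMap_apply,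
    Matrix.single, ite_and, Fintype.sum_prod_type, Finset.sum_ite_eq,
    Finset.sum_ite_eq']

lemma traceStdKron {d : ℕ} (X : Matrix (Fin d) (Fin d) ℂ) (c a : Fin d) :
    (Matrix.single c a (1:ℂ) ⊗ₖ X).trace = (if c = a then 1 else 0) * X.trace := by
  rw [Matrix.trace_kronecker]
  congr 1
  by_cases h : c = a
  · subst h
    rw [Matrix.trace_single_eq_same, if_pos rfl]
  · rw [Matrix.trace_single_eq_of_ne c a 1 h, if_neg h]

end Helpers

set_option maxHeartbeats 2000000 in
/-- A unital quantum channel is determined linearly by its average gate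
fidelities relative to a unitary 2-design:
Λ = (1/|S|) Σ_{C∈S} (D·F(C,Λ) − D/d + 1)·ω(C) with D = d(d+1)(d²−1). -/
theorem unital_channel_reconstruction_from_two_design {d : ℕ} (hd : 2 ≤ d)
    (S : Finset (Matrix (Fin d) (Fin d) ℂ)) (hSne : S.Nonempty)
    (hSU : ∀ C ∈ S, Cᴴ * C = 1 ∧ C * Cᴴ = 1)
    (hdesign : ∀ M : Matrix (Fin d × Fin d) (Fin d × Fin d) ℂ,
      (S.card : ℂ)⁻¹ • ∑ C ∈ S, (C ⊗ₖ C) * M * (C ⊗ₖ C)ᴴ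
        = (((d : ℂ) ^ 2 * M.trace - (d : ℂ) * (swapMatrix d * M).trace) /
            ((d : ℂ) ^ 2 * ((d : ℂ) ^ 2 - 1))) • (1 : Matrix (Fin d × Fin d) (Fin d × Fin d) ℂ)
          + (((d : ℂ) ^ 2 * (swapMatrix d * M).trace - (d : ℂ) * M.trace) /
            ((d : ℂ) ^ 2 * ((d : ℂ) ^ 2 - 1))) • swapMatrix d)
    (Λ : Matrix (Fin d) (Fin d) ℂ →ₗ[ℂ] Matrix (Fin d) (Fin d) ℂ)
    (hCP : (choi Λ).PosSemidef)
    (hTP : ∀ X, (Λ X).trace = X.trace)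
    (hunital : Λ 1 = 1) :
    ∀ X : Matrix (Fin d) (Fin d) ℂ,
      Λ X = (S.card : ℂ)⁻¹ •
        ∑ C ∈ S,
          (((d : ℂ) * ((d : ℂ) + 1) * ((d : ℂ) ^ 2 - 1)) * avgFid Λ C
              - ((d : ℂ) * ((d : ℂ) + 1) * ((d : ℂ) ^ 2 - 1)) / (d : ℂ) + 1) •
            (C * X * Cᴴ) := by
  intro X
  have hd0 : (d:ℂ) ≠ 0 := Nat.cast_ne_zero.mpr (by omega)
  have hd1 : (d:ℂ) + 1 ≠ 0 := by
    have : ((d:ℂ) + 1) = ((d + 1 : ℕ) : ℂ) := by push_cast; ring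
    rw [this]
    exact Nat.cast_ne_zero.mpr (by omega)
  have h21 : ((d:ℂ)^2 - 1) ≠ 0 := by
    have h1 : (d:ℂ)^2 = ((d^2:ℕ):ℂ) := by push_cast; ring
    rw [h1]
    exact sub_ne_zero.mpr (by exact_mod_cast Nat.ne_of_gt (by nlinarith))
  have hS0 : (S.card : ℂ) ≠ 0 := Nat.cast_ne_zero.mpr (Finset.card_ne_zero.mpr hSne)
  set E : Fin d → Fin d → Matrix (Fin d) (Fin d) ℂ :=
    fun i j => Matrix.single i j (1:ℂ) with hE
  -- the key scalar 2-design identity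
  have key : ∀ (c a e k b l : Fin d),
      (S.card:ℂ)⁻¹ * ∑ C ∈ S, C e c * star (C b a) * (C * X * Cᴴ) k l
      = ((d:ℂ)^2 * ((if c = a then 1 else 0) * X.trace) - (d:ℂ) * X a c) /
          ((d:ℂ)^2*((d:ℂ)^2-1)) * ((if e = b then 1 else 0) * (if k = l then 1 else 0))
        + ((d:ℂ)^2 * X a c - (d:ℂ) * ((if c = a then 1 else 0) * X.trace)) /
          ((d:ℂ)^2*((d:ℂ)^2-1)) * ((if e = l then 1 else 0) * (if k = b then 1 else 0)) := by
    intro c a e k b l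
    have H := hdesign (Matrix.single c a (1:ℂ) ⊗ₖ X)
    have hsum : (∑ C ∈ S, (C ⊗ₖ C) * (Matrix.single c a (1:ℂ) ⊗ₖ X) * (C ⊗ₖ C)ᴴ)
        = ∑ C ∈ S, (C * Matrix.single c a (1:ℂ) * Cᴴ) ⊗ₖ (C * X * Cᴴ) :=
      Finset.sum_congr rfl fun C _ => by
        rw [kronAdj, Matrix.mul_kronecker_mul, Matrix.mul_kronecker_mul]
    rw [hsum] at H
    simp only [swapTraceStd, traceStdKron] at H
    have H2 := congrFun (congrFun H (e,k)) (b,l)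
    simp only [Matrix.smul_apply, Matrix.sum_apply, Matrix.kroneckerMap_apply, mulStd,
      Matrix.add_apply, Matrix.one_apply, swapMatrix, Matrix.of_apply, Prod.mk.injEq,
      smul_eq_mul] at H2
    have iteMul : ∀ (p q : Prop) (_ : Decidable p) (_ : Decidable q),
        (if p then (1:ℂ) else 0) * (if q then 1 else 0) = if p ∧ q then 1 else 0 := by
      intro p q _ _
      by_cases hp : p <;> by_cases hq : q <;> simp [hp, hq]
    simp only [iteMul]
    exact H2
  -- facts about Λ
  have htr : ∀ a c, ∑ b, (Λ (E a c)) b b = if a = c then (1:ℂ) else 0 := by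
    intro a c
    have h1 := hTP (E a c)
    have h2 : (E a c).trace = if a = c then (1:ℂ) else 0 := by
      by_cases hac : a = c
      · subst hac
        rw [hE]
        rw [Matrix.trace_single_eq_same, if_pos rfl]
      · rw [hE]
        rw [Matrix.trace_single_eq_of_ne a c 1 hac, if_neg hac]
    have h3 : (Λ (E a c)).trace = ∑ b, (Λ (E a c)) b b := rfl
    rw [← h3, h1, h2]
  have hΛX : ∀ (k l : Fin d), (Λ X) k l = ∑ a, ∑ c, X a c * (Λ (E a c)) k l := by
    intro k l
    have h1 : Λ X = ∑ a, ∑ c, X a c • Λ (E a c) := by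
      conv_lhs => rw [Matrix.matrix_eq_sum_single X]
      rw [map_sum]
      refine Finset.sum_congr rfl fun a _ => ?_
      rw [map_sum]
      refine Finset.sum_congr rfl fun c _ => ?_
      rw [show Matrix.single a c (X a c) = X a c • E a c by
        rw [hE, Matrix.smul_single, smul_eq_mul, mul_one], map_smul]
    rw [h1]
    simp [Matrix.sum_apply]
  have hI : ∀ (k l : Fin d), ∑ a, (Λ (E a a)) k l = if k = l then (1:ℂ) else 0 := by
    intro k l
    have h1 : (∑ a, E a a) = (1 : Matrix (Fin d) (Fin d) ℂ) := by
      ext i j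
      simp [hE, Matrix.sum_apply, Matrix.single, Matrix.one_apply, ite_and,
        Finset.sum_ite_eq]
    have h2 : ∑ a, Λ (E a a) = (1 : Matrix (Fin d) (Fin d) ℂ) := by
      rw [← map_sum, h1, hunital]
    calc ∑ a, (Λ (E a a)) k l = (∑ a, Λ (E a a)) k l := by simp [Matrix.sum_apply]
      _ = _ := by rw [h2, Matrix.one_apply]
  have hX : ∑ a : Fin d, X a a = X.trace := rfl
  -- Claim A : 1-design averaging
  have claimA : ∀ (k l : Fin d), (S.card:ℂ)⁻¹ * ∑ C ∈ S, (C * X * Cᴴ) k l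
      = X.trace / (d:ℂ) * (if k = l then 1 else 0) := by
    intro k l
    have hnorm : ∀ C ∈ S, ∑ a : Fin d, ∑ b : Fin d, C b a * star (C b a) = (d:ℂ) := by
      intro C hC
      have h1 : ∀ b, ∑ a, C b a * (starRingEnd ℂ) (C b a) = (1 : ℂ) := by
        intro b
        have := congrFun (congrFun (hSU C hC).2 b) b
        simpa [Matrix.mul_apply, Matrix.conjTranspose_apply, Matrix.one_apply] using this
      rw [Finset.sum_comm]
      simp [h1]
    have hmain : ∑ a : Fin d, ∑ b : Fin d,
        ((S.card:ℂ)⁻¹ * ∑ C ∈ S, C b a * star (C b a) * (C * X * Cᴴ) k l)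
        = (d:ℂ) * ((S.card:ℂ)⁻¹ * ∑ C ∈ S, (C * X * Cᴴ) k l) := by
      simp only [← Finset.mul_sum]
      rw [mul_left_comm]
      congr 1
      calc ∑ a : Fin d, ∑ b : Fin d, ∑ C ∈ S, C b a * star (C b a) * (C * X * Cᴴ) k l
          = ∑ a : Fin d, ∑ C ∈ S, ∑ b : Fin d, C b a * star (C b a) * (C * X * Cᴴ) k l :=
            Finset.sum_congr rfl fun a _ => Finset.sum_comm
        _ = ∑ C ∈ S, ∑ a : Fin d, ∑ b : Fin d, C b a * star (C b a) * (C * X * Cᴴ) k l :=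
            Finset.sum_comm
        _ = ∑ C ∈ S, (d:ℂ) * (C * X * Cᴴ) k l := by
            refine Finset.sum_congr rfl fun C hC => ?_
            simp only [← Finset.sum_mul]
            rw [hnorm C hC]
        _ = (d:ℂ) * ∑ C ∈ S, (C * X * Cᴴ) k l := by rw [Finset.mul_sum]
    rw [Finset.sum_congr rfl (fun a (_ : a ∈ Finset.univ) =>
          Finset.sum_congr rfl fun b (_ : b ∈ Finset.univ) => key a a b k b l)] at hmain
    rw [show (∑ a : Fin d, ∑ b : Fin d,
        (((d:ℂ)^2 * ((if a = a then (1:ℂ) else 0) * X.trace) - (d:ℂ) * X a a) /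
            ((d:ℂ)^2*((d:ℂ)^2-1)) * ((if b = b then (1:ℂ) else 0) * (if k = l then (1:ℂ) else 0))
          + ((d:ℂ)^2 * X a a - (d:ℂ) * ((if a = a then (1:ℂ) else 0) * X.trace)) /
            ((d:ℂ)^2*((d:ℂ)^2-1)) * ((if b = l then (1:ℂ) else 0) * (if k = b then (1:ℂ) else 0))))
        = X.trace * (if k = l then 1 else 0) from ?_] at hmain
    · rw [div_mul_eq_mul_div, eq_div_iff hd0]
      linear_combination -hmain
    · simp only [if_pos rfl, one_mul, mul_ite, mul_one, mul_zero, Finset.sum_ite_eq',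
        Finset.mem_univ, if_true, Finset.sum_add_distrib, Finset.sum_const, Finset.card_univ,
        Fintype.card_fin, nsmul_eq_mul]
      by_cases hkl : k = l <;> simp [hkl]
      · simp only [← mul_div_assoc, ← Finset.sum_div, Finset.sum_sub_distrib, ← Finset.mul_sum, hX]
        simp only [Finset.sum_const, Finset.card_univ, Fintype.card_fin, nsmul_eq_mul]
        field_simp
        ring
  -- Claim B : 2-design averaging against fidelities
  have claimB : ∀ (k l : Fin d), (S.card:ℂ)⁻¹ * ∑ C ∈ S,
        (∑ i, ∑ j, (Cᴴ * Λ (E i j) * C) i j) * (C * X * Cᴴ) k l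
      = X.trace/(d:ℂ) * (if k = l then 1 else 0)
        + ((d:ℂ)^2-1)⁻¹ * ((Λ X) k l - X.trace/(d:ℂ) * (if k = l then 1 else 0)) := by
    intro k l
    have hexp : ∀ (C : Matrix (Fin d) (Fin d) ℂ) (a c : Fin d),
        (Cᴴ * Λ (E a c) * C) a c
          = ∑ b, ∑ e, star (C b a) * (Λ (E a c)) b e * C e c := by
      intro C a c
      simp only [Matrix.mul_apply, Matrix.conjTranspose_apply, Finset.sum_mul]
      exact Finset.sum_comm
    have step1 : ∑ C ∈ S, (∑ a, ∑ c, (Cᴴ * Λ (E a c) * C) a c) * (C * X * Cᴴ) k l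
        = ∑ a, ∑ c, ∑ b, ∑ e, (Λ (E a c)) b e *
            ∑ C ∈ S, C e c * star (C b a) * (C * X * Cᴴ) k l := by
      calc ∑ C ∈ S, (∑ a, ∑ c, (Cᴴ * Λ (E a c) * C) a c) * (C * X * Cᴴ) k l
          = ∑ C ∈ S, ∑ a, ∑ c, ∑ b, ∑ e,
              (Λ (E a c)) b e * (C e c * star (C b a) * (C * X * Cᴴ) k l) := by
            refine Finset.sum_congr rfl fun C _ => ?_
            simp only [hexp, Finset.sum_mul]
            refine Finset.sum_congr rfl fun a _ => Finset.sum_congr rfl fun c _ => ?_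
            refine Finset.sum_congr rfl fun b _ => Finset.sum_congr rfl fun e _ => by ring
        _ = ∑ a, ∑ c, ∑ b, ∑ e, ∑ C ∈ S,
              (Λ (E a c)) b e * (C e c * star (C b a) * (C * X * Cᴴ) k l) := by
            rw [Finset.sum_comm]
            refine Finset.sum_congr rfl fun a _ => ?_
            rw [Finset.sum_comm]
            refine Finset.sum_congr rfl fun c _ => ?_
            rw [Finset.sum_comm]
            refine Finset.sum_congr rfl fun b _ => ?_
            rw [Finset.sum_comm]
        _ = ∑ a, ∑ c, ∑ b, ∑ e, (Λ (E a c)) b e *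
              ∑ C ∈ S, C e c * star (C b a) * (C * X * Cᴴ) k l := by
            simp only [Finset.mul_sum]
    rw [step1]
    calc (S.card:ℂ)⁻¹ * (∑ a, ∑ c, ∑ b, ∑ e, (Λ (E a c)) b e *
            ∑ C ∈ S, C e c * star (C b a) * (C * X * Cᴴ) k l)
        = ∑ a, ∑ c, ∑ b, ∑ e, (Λ (E a c)) b e *
            (((d:ℂ)^2 * ((if c = a then 1 else 0) * X.trace) - (d:ℂ) * X a c) /
              ((d:ℂ)^2*((d:ℂ)^2-1)) * ((if e = b then 1 else 0) * (if k = l then 1 else 0))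
            + ((d:ℂ)^2 * X a c - (d:ℂ) * ((if c = a then 1 else 0) * X.trace)) /
              ((d:ℂ)^2*((d:ℂ)^2-1)) * ((if e = l then 1 else 0) * (if k = b then 1 else 0))) := by
          rw [Finset.mul_sum]
          refine Finset.sum_congr rfl fun a _ => ?_
          rw [Finset.mul_sum]
          refine Finset.sum_congr rfl fun c _ => ?_
          rw [Finset.mul_sum]
          refine Finset.sum_congr rfl fun b _ => ?_
          rw [Finset.mul_sum]
          refine Finset.sum_congr rfl fun e _ => ?_
          rw [mul_left_comm, key c a e k b l]
      _ = X.trace/(d:ℂ) * (if k = l then 1 else 0)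
            + ((d:ℂ)^2-1)⁻¹ * ((Λ X) k l - X.trace/(d:ℂ) * (if k = l then 1 else 0)) := by
          simp only [mul_add, Finset.sum_add_distrib]
          have hsum1 : ∑ a, ∑ c, ∑ b, ∑ e, (Λ (E a c)) b e *
              (((d:ℂ)^2 * ((if c = a then 1 else 0) * X.trace) - (d:ℂ) * X a c) /
                  ((d:ℂ)^2*((d:ℂ)^2-1)) * ((if e = b then 1 else 0) * (if k = l then 1 else 0)))
              = X.trace/(d:ℂ) * (if k = l then 1 else 0) := by
            have h1 : ∀ a c b, ∑ e, (Λ (E a c)) b e *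
                (((d:ℂ)^2 * ((if c = a then 1 else 0) * X.trace) - (d:ℂ) * X a c) /
                  ((d:ℂ)^2*((d:ℂ)^2-1)) * ((if e = b then 1 else 0) * (if k = l then 1 else 0)))
                = (Λ (E a c)) b b *
                  (((d:ℂ)^2 * ((if c = a then 1 else 0) * X.trace) - (d:ℂ) * X a c) /
                  ((d:ℂ)^2*((d:ℂ)^2-1)) * (if k = l then 1 else 0)) := by
              intro a c b
              rw [Finset.sum_eq_single b (fun e _ hne => by simp [hne]) (by simp)]
              simp
            have h2 : ∀ a c, ∑ b, (Λ (E a c)) b b *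
                (((d:ℂ)^2 * ((if c = a then 1 else 0) * X.trace) - (d:ℂ) * X a c) /
                  ((d:ℂ)^2*((d:ℂ)^2-1)) * (if k = l then 1 else 0))
                = (if a = c then (1:ℂ) else 0) *
                  (((d:ℂ)^2 * ((if c = a then 1 else 0) * X.trace) - (d:ℂ) * X a c) /
                  ((d:ℂ)^2*((d:ℂ)^2-1)) * (if k = l then 1 else 0)) := by
              intro a c
              rw [← Finset.sum_mul, htr]
            have h3 : ∀ a, ∑ c, (if a = c then (1:ℂ) else 0) *
                (((d:ℂ)^2 * ((if c = a then 1 else 0) * X.trace) - (d:ℂ) * X a c) /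
                  ((d:ℂ)^2*((d:ℂ)^2-1)) * (if k = l then 1 else 0))
                = ((d:ℂ)^2 * X.trace - (d:ℂ) * X a a) /
                  ((d:ℂ)^2*((d:ℂ)^2-1)) * (if k = l then 1 else 0) := by
              intro a
              rw [Finset.sum_eq_single a (fun c _ hne => by simp [Ne.symm hne]) (by simp)]
              simp
            rw [Finset.sum_congr rfl fun a _ => by
              rw [Finset.sum_congr rfl fun c _ => by
                rw [Finset.sum_congr rfl fun b _ => h1 a c b, h2 a c], h3 a]]
            rw [← Finset.sum_mul, ← Finset.sum_div, Finset.sum_sub_distrib]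
            simp only [← Finset.mul_sum, hX]
            simp only [Finset.sum_const, Finset.card_univ, Fintype.card_fin, nsmul_eq_mul]
            congr 1
            field_simp
          have hsum2 : ∑ a, ∑ c, ∑ b, ∑ e, (Λ (E a c)) b e *
              (((d:ℂ)^2 * X a c - (d:ℂ) * ((if c = a then 1 else 0) * X.trace)) /
                  ((d:ℂ)^2*((d:ℂ)^2-1)) * ((if e = l then 1 else 0) * (if k = b then 1 else 0)))
              = ((d:ℂ)^2 * (Λ X) k l - (d:ℂ) * X.trace * (if k = l then 1 else 0)) /
                  ((d:ℂ)^2*((d:ℂ)^2-1)) := by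
            have h1 : ∀ a c b, ∑ e, (Λ (E a c)) b e *
                (((d:ℂ)^2 * X a c - (d:ℂ) * ((if c = a then 1 else 0) * X.trace)) /
                  ((d:ℂ)^2*((d:ℂ)^2-1)) * ((if e = l then 1 else 0) * (if k = b then 1 else 0)))
                = (Λ (E a c)) b l *
                  (((d:ℂ)^2 * X a c - (d:ℂ) * ((if c = a then 1 else 0) * X.trace)) /
                  ((d:ℂ)^2*((d:ℂ)^2-1)) * (if k = b then 1 else 0)) := by
              intro a c b
              rw [Finset.sum_eq_single l (fun e _ hne => by simp [hne]) (by simp)]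
              simp
            have h2 : ∀ a c, ∑ b, (Λ (E a c)) b l *
                (((d:ℂ)^2 * X a c - (d:ℂ) * ((if c = a then 1 else 0) * X.trace)) /
                  ((d:ℂ)^2*((d:ℂ)^2-1)) * (if k = b then 1 else 0))
                = (Λ (E a c)) k l *
                  (((d:ℂ)^2 * X a c - (d:ℂ) * ((if c = a then 1 else 0) * X.trace)) /
                  ((d:ℂ)^2*((d:ℂ)^2-1))) := by
              intro a c
              rw [Finset.sum_eq_single k (fun b _ hne => by simp [Ne.symm hne]) (by simp)]
              simp
            rw [Finset.sum_congr rfl fun a _ => Finset.sum_congr rfl fun c _ => by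
              rw [Finset.sum_congr rfl fun b _ => h1 a c b, h2 a c]]
            have expand : ∀ a c, (Λ (E a c)) k l *
                (((d:ℂ)^2 * X a c - (d:ℂ) * ((if c = a then 1 else 0) * X.trace)) /
                  ((d:ℂ)^2*((d:ℂ)^2-1)))
                = ((d:ℂ)^2 / ((d:ℂ)^2*((d:ℂ)^2-1))) * (X a c * (Λ (E a c)) k l)
                  - ((d:ℂ) * X.trace / ((d:ℂ)^2*((d:ℂ)^2-1))) *
                    ((if c = a then (1:ℂ) else 0) * (Λ (E a c)) k l) := by
              intro a c
              ring
            rw [Finset.sum_congr rfl fun a _ => Finset.sum_congr rfl fun c _ => expand a c]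
            simp only [Finset.sum_sub_distrib, ← Finset.mul_sum]
            have hdiag : ∑ a, ∑ c, (if c = a then (1:ℂ) else 0) * (Λ (E a c)) k l
                = if k = l then (1:ℂ) else 0 := by
              rw [Finset.sum_congr rfl fun a _ =>
                Finset.sum_eq_single a (fun c _ hne => by simp [hne]) (by simp)]
              simpa using hI k l
            rw [hdiag, ← hΛX]
            generalize (if k = l then (1:ℂ) else 0) = t
            field_simp
            try ring
          rw [hsum1, hsum2]
          generalize (if k = l then (1:ℂ) else 0) = t
          field_simp
          try ring
  -- coefficient simplification
  have hcoeff : ∀ C : Matrix (Fin d) (Fin d) ℂ,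
      (((d : ℂ) * ((d : ℂ) + 1) * ((d : ℂ) ^ 2 - 1)) * avgFid Λ C
          - ((d : ℂ) * ((d : ℂ) + 1) * ((d : ℂ) ^ 2 - 1)) / (d : ℂ) + 1)
      = ((d:ℂ)^2 - 1) * (∑ i, ∑ j, (Cᴴ * Λ (E i j) * C) i j) - ((d:ℂ)^2 - 2) := by
    intro C
    rw [avgFid, entFid]
    field_simp
    ring
  -- assemble
  ext k l
  rw [Matrix.smul_apply, Matrix.sum_apply]
  simp only [Matrix.smul_apply, smul_eq_mul]
  rw [Finset.sum_congr rfl fun C _ => by rw [hcoeff C]]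
  have distrib : ∑ C ∈ S, (((d:ℂ)^2 - 1) * (∑ i, ∑ j, (Cᴴ * Λ (E i j) * C) i j)
        - ((d:ℂ)^2 - 2)) * (C * X * Cᴴ) k l
      = ((d:ℂ)^2 - 1) * ∑ C ∈ S, (∑ i, ∑ j, (Cᴴ * Λ (E i j) * C) i j) * (C * X * Cᴴ) k l
        - ((d:ℂ)^2 - 2) * ∑ C ∈ S, (C * X * Cᴴ) k l := by
    rw [Finset.mul_sum, Finset.mul_sum, ← Finset.sum_sub_distrib]
    exact Finset.sum_congr rfl fun C _ => by ring
  rw [distrib, mul_sub, mul_left_comm, mul_left_comm ((S.card:ℂ)⁻¹) (((d:ℂ)^2 - 2)),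
    claimB k l, claimA k l]
  generalize (if k = l then (1:ℂ) else 0) = t
  field_simp
  ring
end
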